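/- Let U : (0,∞) → ℝ be concave and strictly increasing (extended to [0,∞] monotonically, with values in the extended reals). Let 𝒫₀ and 𝒫₁ be classes of probability measures on a measurable space X, let (P₀*, P₁*) ∈ 𝒫₀ × 𝒫₁ satisfy the stochastic-dominance property, and let 𝒞 be an arbitrary set of measurable functions X → [0,∞); for a set H of probability measures define ℰ′(H) = { E ∈ 𝒞 : ∫ E dP ≤ 1 for all P ∈ H }. Suppose E* ∈ ℰ′({P₀*}) maximizes E ↦ E_{P₁*}[U(E)] over ℰ′({P₀*}) and that E* = ψ(L*) for some nondecreasing measurable ψ : [0,∞) → [0,∞). Then E* ∈ ℰ′(𝒫₀), and sup over E ∈ ℰ′(𝒫₀) of inf over P₁ ∈ 𝒫₁ of E_{P₁}[U(E)] equals inf over P₁ ∈ 𝒫₁ of E_{P₁}[U(E*)], which equals E_{P₁*}[U(E*)] (expectations in the extended reals). -/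
import Mathlib


open MeasureTheory Real Set
open scoped ENNReal

noncomputable section

attribute [local instance] Classical.propDecidable

/-- Nonnegative part of an extended real, as an extended nonnegative real. -/
def eToENN (x : EReal) : ℝ≥0∞ := if x = ⊤ then ⊤ else ENNReal.ofReal x.toReal

/-- Integral of an extended-real-valued function, with values in the extended reals. -/
def eintE {Y : Type*} [MeasurableSpace Y] (μ : Measure Y) (f : Y → EReal) : EReal :=
  ((∫⁻ y, eToENN (f y) ∂μ : ℝ≥0∞) : EReal) - ((∫⁻ y, eToENN (-(f y)) ∂μ : ℝ≥0∞) : EReal)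

lemma eintE_nonneg_eq {Y : Type*} [MeasurableSpace Y] (μ : Measure Y) (g : Y → ℝ)
    (hg : ∀ y, 0 ≤ g y) :
    eintE μ (fun y => ((g y : ℝ) : EReal)) = ((∫⁻ y, ENNReal.ofReal (g y) ∂μ : ℝ≥0∞) : EReal) := by
  unfold eintE eToENN
  have h1 : (fun y => if ((g y : ℝ) : EReal) = ⊤ then (⊤ : ℝ≥0∞)
      else ENNReal.ofReal ((g y : ℝ) : EReal).toReal) = fun y => ENNReal.ofReal (g y) := by
    funext y; simp [EReal.coe_ne_top]
  have h2 : (fun y => if (-((g y : ℝ) : EReal)) = ⊤ then (⊤ : ℝ≥0∞)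
      else ENNReal.ofReal (-((g y : ℝ) : EReal)).toReal) = fun _ => (0 : ℝ≥0∞) := by
    funext y
    have : (-((g y : ℝ) : EReal)) = ((-(g y) : ℝ) : EReal) := by
      simp
    rw [this]
    simp [EReal.coe_ne_top, ENNReal.ofReal_eq_zero, neg_nonpos, hg y]
  simp only [h1, h2, lintegral_zero, EReal.coe_ennreal_zero, sub_zero]

/-- Composite lifting of constrained optimal e-variables for a general
concave strictly increasing utility `U` (extended monotonically to `[0,∞]` as `Ue`): if the
simple-vs-simple optimizer `E*` for the LFD pair is a nondecreasing transform of the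
likelihood ratio, it is valid for the composite null and achieves the max–min utility. -/
theorem composite_lifting_general_utility
    {X : Type*} [MeasurableSpace X]
    (𝒫₀ 𝒫₁ : Set (Measure X))
    (h𝒫₀ : ∀ P ∈ 𝒫₀, IsProbabilityMeasure P) (h𝒫₁ : ∀ P ∈ 𝒫₁, IsProbabilityMeasure P)
    (Pstar₀ Pstar₁ : Measure X) (hmem₀ : Pstar₀ ∈ 𝒫₀) (hmem₁ : Pstar₁ ∈ 𝒫₁)
    [IsProbabilityMeasure Pstar₀] [IsProbabilityMeasure Pstar₁]
    (hac : Pstar₁ ≪ Pstar₀)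
    (Lstar : X → ℝ) (hL : Lstar = fun x => (Pstar₁.rnDeriv Pstar₀ x).toReal)
    -- stochastic-dominance property of the LFD pair
    (hSD₀ : ∀ f : ℝ → EReal, Measurable f → MonotoneOn f (Set.Ici 0) →
      ∀ P₀ ∈ 𝒫₀, eintE P₀ (fun x => f (Lstar x)) ≤ eintE Pstar₀ (fun x => f (Lstar x)))
    (hSD₁ : ∀ f : ℝ → EReal, Measurable f → MonotoneOn f (Set.Ici 0) →
      ∀ P₁ ∈ 𝒫₁, eintE Pstar₁ (fun x => f (Lstar x)) ≤ eintE P₁ (fun x => f (Lstar x)))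
    -- the utility and its monotone extension to `[0,∞]`
    (U : ℝ → ℝ) (hUconc : ConcaveOn ℝ (Set.Ioi 0) U) (hUmono : StrictMonoOn U (Set.Ioi 0))
    (Ue : ℝ → EReal) (hUe : ∀ x : ℝ, 0 < x → Ue x = ((U x : ℝ) : EReal))
    (hUemono : MonotoneOn Ue (Set.Ici 0)) (hUemeas : Measurable Ue)
    -- the structural constraint class
    (𝒞 : Set (X → ℝ)) (h𝒞 : ∀ E ∈ 𝒞, Measurable E ∧ ∀ x, 0 ≤ E x)
    -- the simple-vs-simple optimizer and its monotone representation
    (Estar : X → ℝ) (hE𝒞 : Estar ∈ 𝒞)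
    (hEvalid : (∫⁻ x, ENNReal.ofReal (Estar x) ∂Pstar₀) ≤ 1)
    (hEopt : ∀ E ∈ 𝒞, (∫⁻ x, ENNReal.ofReal (E x) ∂Pstar₀) ≤ 1 →
      eintE Pstar₁ (fun x => Ue (E x)) ≤ eintE Pstar₁ (fun x => Ue (Estar x)))
    (ψ : ℝ → ℝ) (hψmono : MonotoneOn ψ (Set.Ici 0)) (hψmeas : Measurable ψ)
    (hψnonneg : ∀ y : ℝ, 0 ≤ y → 0 ≤ ψ y)
    (hrep : ∀ x, Estar x = ψ (Lstar x)) :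
    (∀ P₀ ∈ 𝒫₀, (∫⁻ x, ENNReal.ofReal (Estar x) ∂P₀) ≤ 1) ∧
      (⨆ E ∈ {E : X → ℝ | E ∈ 𝒞 ∧ ∀ P₀ ∈ 𝒫₀, (∫⁻ x, ENNReal.ofReal (E x) ∂P₀) ≤ 1},
          ⨅ P₁ ∈ 𝒫₁, eintE P₁ (fun x => Ue (E x))) =
        (⨅ P₁ ∈ 𝒫₁, eintE P₁ (fun x => Ue (Estar x))) ∧
      (⨅ P₁ ∈ 𝒫₁, eintE P₁ (fun x => Ue (Estar x))) =
        eintE Pstar₁ (fun x => Ue (Estar x)) := by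
  classical
  -- validity of Estar for the composite null
  have hEnn : ∀ x, 0 ≤ Estar x := (h𝒞 Estar hE𝒞).2
  have hvalid : ∀ P₀ ∈ 𝒫₀, (∫⁻ x, ENNReal.ofReal (Estar x) ∂P₀) ≤ 1 := by
    intro P₀ hP₀
    have hf : Measurable (fun y : ℝ => ((ψ y : ℝ) : EReal)) :=
      measurable_coe_real_ereal.comp hψmeas
    have hfm : MonotoneOn (fun y : ℝ => ((ψ y : ℝ) : EReal)) (Set.Ici 0) := by
      intro a ha b hb hab
      exact EReal.coe_le_coe_iff.mpr (hψmono ha hb hab)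
    have h := hSD₀ _ hf hfm P₀ hP₀
    have hrw : ∀ μ : Measure X, eintE μ (fun x => ((ψ (Lstar x) : ℝ) : EReal)) =
        ((∫⁻ x, ENNReal.ofReal (Estar x) ∂μ : ℝ≥0∞) : EReal) := by
      intro μ
      have := eintE_nonneg_eq μ (fun x => ψ (Lstar x))
        (fun x => (hrep x ▸ hEnn x : 0 ≤ ψ (Lstar x)))
      rw [this]
      congr 1
      exact lintegral_congr fun x => by rw [hrep x]
    rw [hrw, hrw] at h
    have h1 : ((∫⁻ x, ENNReal.ofReal (Estar x) ∂P₀ : ℝ≥0∞) : EReal) ≤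
        ((1 : ℝ≥0∞) : EReal) := by
      refine le_trans h ?_
      exact EReal.coe_ennreal_le_coe_ennreal_iff.mpr hEvalid
    exact EReal.coe_ennreal_le_coe_ennreal_iff.mp h1
  -- the third equality
  have hUψmeas : Measurable (fun y : ℝ => Ue (ψ y)) := hUemeas.comp hψmeas
  have hUψmono : MonotoneOn (fun y : ℝ => Ue (ψ y)) (Set.Ici 0) := by
    intro a ha b hb hab
    exact hUemono (hψnonneg a ha) (hψnonneg b hb) (hψmono ha hb hab)
  have hcomp : ∀ μ : Measure X, eintE μ (fun x => Ue (ψ (Lstar x))) =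
      eintE μ (fun x => Ue (Estar x)) := by
    intro μ; congr 1; funext x; rw [hrep x]
  have hinf_eq : (⨅ P₁ ∈ 𝒫₁, eintE P₁ (fun x => Ue (Estar x))) =
      eintE Pstar₁ (fun x => Ue (Estar x)) := by
    apply le_antisymm
    · exact iInf₂_le Pstar₁ hmem₁
    · refine le_iInf₂ fun P₁ hP₁ => ?_
      have h := hSD₁ _ hUψmeas hUψmono P₁ hP₁
      rw [hcomp, hcomp] at h
      exact h
  refine ⟨hvalid, ?_, hinf_eq⟩
  apply le_antisymm
  · refine iSup₂_le fun E hE => ?_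
    obtain ⟨hE𝒞', hEval'⟩ := hE
    have hEPstar : (∫⁻ x, ENNReal.ofReal (E x) ∂Pstar₀) ≤ 1 := hEval' Pstar₀ hmem₀
    calc (⨅ P₁ ∈ 𝒫₁, eintE P₁ (fun x => Ue (E x)))
        ≤ eintE Pstar₁ (fun x => Ue (E x)) := iInf₂_le Pstar₁ hmem₁
      _ ≤ eintE Pstar₁ (fun x => Ue (Estar x)) := hEopt E hE𝒞' hEPstar
      _ = ⨅ P₁ ∈ 𝒫₁, eintE P₁ (fun x => Ue (Estar x)) := hinf_eq.symm
  · have hmem : Estar ∈ {E : X → ℝ | E ∈ 𝒞 ∧ ∀ P₀ ∈ 𝒫₀,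
        (∫⁻ x, ENNReal.ofReal (E x) ∂P₀) ≤ 1} := ⟨hE𝒞, hvalid⟩
    exact le_iSup₂_of_le Estar hmem le_rfl
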